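/- (Existence of the Riemann integral of UC functions on rational intervals) Let u < v be real numbers and let f : [u,v]_ℚ → ℝ be uniformly continuous. Then there exists a real number L such that for every sequence (P_k) of tagged partitions of [u,v]_ℚ with Δ(P_k) → 0, the Riemann sums R(f, P_k) converge to L. -/

import Mathlib

open Filter Topology Set

/-- The rational interval [u,v]_ℚ = {a ∈ ℚ : u ≤ a ≤ v}. -/
def RatIcc (u v : ℝ) : Set ℚ := {a : ℚ | u ≤ (a : ℝ) ∧ (a : ℝ) ≤ v}

/-- Uniform continuity of f : M → ℝ for M ⊆ ℚ. -/
def UC (M : Set ℚ) (f : ℚ → ℝ) : Prop :=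
  ∀ ε : ℝ, 0 < ε → ∃ δ : ℝ, 0 < δ ∧
    ∀ a ∈ M, ∀ b ∈ M, |(a : ℝ) - (b : ℝ)| ≤ δ → |f a - f b| ≤ ε

/-- A tagged partition of [u,v]_ℚ: real partition points u = u₀ < u₁ < … < u_n = v
with rational tags b_i ∈ [u_{i−1}, u_i]_ℚ. -/
structure TaggedPartition (u v : ℝ) where
  n : ℕ
  pts : Fin (n + 1) → ℝ
  mono : StrictMono pts
  first : pts 0 = u
  last : pts (Fin.last n) = v
  tags : Fin n → ℚ
  tag_lb : ∀ i : Fin n, pts i.castSucc ≤ (tags i : ℝ)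
  tag_ub : ∀ i : Fin n, (tags i : ℝ) ≤ pts i.succ

/-- The norm Δ(P) of a tagged partition: the largest subinterval length. -/
noncomputable def TaggedPartition.norm {u v : ℝ} (P : TaggedPartition u v) : ℝ :=
  ⨆ i : Fin P.n, (P.pts i.succ - P.pts i.castSucc)

/-- The Riemann sum R(f, P). -/
noncomputable def TaggedPartition.riemannSum {u v : ℝ} (P : TaggedPartition u v)
    (f : ℚ → ℝ) : ℝ :=
  ∑ i : Fin P.n, f (P.tags i) * (P.pts i.succ - P.pts i.castSucc)

/-- A UC function on the rational interval extends to a function on ℝ which is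
uniformly continuous and agrees with f on `RatIcc u v`. -/
private lemma exists_extension (u v : ℝ) (huv : u < v) (f : ℚ → ℝ)
    (hf : UC (RatIcc u v) f) :
    ∃ G : ℝ → ℝ, Continuous G ∧ (∀ a ∈ RatIcc u v, G (a : ℝ) = f a) ∧
      (∀ ε : ℝ, 0 < ε → ∃ δ : ℝ, 0 < δ ∧ ∀ x y : ℝ, |x - y| ≤ δ → |G x - G y| ≤ ε) := by
  set M := {a : ℚ // a ∈ RatIcc u v}
  set e : M → Icc u v := fun a => ⟨(a.1 : ℝ), a.2.1, a.2.2⟩ with he_def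
  have h_e : IsUniformInducing e := by
    rw [← IsUniformInducing.of_comp_iff isUniformEmbedding_subtype_val.isUniformInducing]
    have : (Subtype.val ∘ e : M → ℝ) = ((↑) : ℚ → ℝ) ∘ Subtype.val := rfl
    rw [this]
    exact Rat.isUniformEmbedding_coe_real.isUniformInducing.comp
      isUniformEmbedding_subtype_val.isUniformInducing
  have h_dense : DenseRange e := by
    intro x
    rw [Metric.mem_closure_iff]
    intro ε hε
    have h1 : max u (x.1 - ε) < min v (x.1 + ε) := by
      rcases x.2 with ⟨hx1, hx2⟩
      apply max_lt <;> apply lt_min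
      · exact huv
      · linarith
      · linarith
      · linarith
    obtain ⟨q, hq1, hq2⟩ := exists_rat_btwn h1
    have hqmem : q ∈ RatIcc u v :=
      ⟨(le_max_left _ _).trans hq1.le, hq2.le.trans (min_le_left _ _)⟩
    refine ⟨e ⟨q, hqmem⟩, mem_range_self _, ?_⟩
    rw [Subtype.dist_eq, Real.dist_eq, abs_sub_lt_iff]
    constructor
    · have := (le_max_right u (x.1 - ε)).trans_lt hq1
      linarith
    · have := hq2.trans_le (min_le_right v (x.1 + ε))
      linarith
  have fc : UniformContinuous (fun a : M => f a.1) := by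
    rw [Metric.uniformContinuous_iff]
    intro ε hε
    obtain ⟨δ, hδ, hδf⟩ := hf (ε / 2) (half_pos hε)
    refine ⟨δ, hδ, fun {a b} hab => ?_⟩
    rw [Real.dist_eq]
    have : |(a.1 : ℝ) - (b.1 : ℝ)| ≤ δ := by
      rw [Subtype.dist_eq, Rat.dist_eq] at hab
      exact hab.le
    exact (hδf a.1 a.2 b.1 b.2 this).trans_lt (half_lt_self hε)
  set ψ : Icc u v → ℝ := (h_e.isDenseInducing h_dense).extend (fun a : M => f a.1) with hψ_def
  have hψ : UniformContinuous ψ := uniformContinuous_uniformly_extend h_e h_dense fc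
  have hψe : ∀ a : M, ψ (e a) = f a.1 := fun a =>
    (h_e.isDenseInducing h_dense).extend_eq fc.continuous a
  refine ⟨fun x => ψ (projIcc u v huv.le x), hψ.continuous.comp continuous_projIcc, ?_, ?_⟩
  · intro a ha
    show ψ (projIcc u v huv.le (a : ℝ)) = f a
    have h2 : projIcc u v huv.le (a : ℝ) = ⟨(a : ℝ), ha.1, ha.2⟩ :=
      projIcc_of_mem huv.le ⟨ha.1, ha.2⟩
    rw [h2]
    exact hψe ⟨a, ha⟩
  · intro ε hε
    obtain ⟨δ, hδ, hδψ⟩ := Metric.uniformContinuous_iff.1 hψ (ε / 2) (half_pos hε)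
    refine ⟨δ / 2, half_pos hδ, fun x y hxy => ?_⟩
    have hd : dist (projIcc u v huv.le x) (projIcc u v huv.le y) < δ := by
      have h3 := (LipschitzWith.projIcc huv.le).dist_le_mul x y
      rw [NNReal.coe_one, one_mul, Real.dist_eq] at h3
      calc dist (projIcc u v huv.le x) (projIcc u v huv.le y) ≤ |x - y| := h3
        _ ≤ δ / 2 := hxy
        _ < δ := half_lt_self hδ
    have h4 := hδψ hd
    rw [Real.dist_eq] at h4
    show |ψ (projIcc u v huv.le x) - ψ (projIcc u v huv.le y)| ≤ ε
    linarith [half_lt_self hε]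

private lemma tags_mem {u v : ℝ} (P : TaggedPartition u v) (i : Fin P.n) :
    P.tags i ∈ RatIcc u v := by
  constructor
  · calc u = P.pts 0 := P.first.symm
      _ ≤ P.pts i.castSucc := P.mono.monotone (Fin.zero_le _)
      _ ≤ (P.tags i : ℝ) := P.tag_lb i
  · calc (P.tags i : ℝ) ≤ P.pts i.succ := P.tag_ub i
      _ ≤ P.pts (Fin.last P.n) := P.mono.monotone (Fin.le_last _)
      _ = v := P.last

private lemma diff_le_norm {u v : ℝ} (P : TaggedPartition u v) (i : Fin P.n) :
    P.pts i.succ - P.pts i.castSucc ≤ P.norm := by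
  rw [TaggedPartition.norm]
  exact le_ciSup (f := fun j : Fin P.n => P.pts j.succ - P.pts j.castSucc)
    (Set.Finite.bddAbove (Set.finite_range _)) i

/-- The key estimate: if the modulus δ controls oscillation of G by ε and the
partition has norm ≤ δ, then the Riemann sum (of G at the tags) is within
ε(v−u) of the integral of G. -/
private lemma riemann_est {u v : ℝ} (huv : u < v) (G : ℝ → ℝ) (hG : Continuous G)
    (P : TaggedPartition u v) (ε δ : ℝ)
    (hmod : ∀ x y : ℝ, |x - y| ≤ δ → |G x - G y| ≤ ε)
    (hnorm : P.norm ≤ δ) :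
    |(∑ i : Fin P.n, G (P.tags i) * (P.pts i.succ - P.pts i.castSucc)) -
      ∫ x in u..v, G x| ≤ ε * (v - u) := by
  set n := P.n
  set a : ℕ → ℝ := fun i => P.pts ⟨min i n, Nat.lt_succ_of_le (min_le_right _ _)⟩ with ha_def
  have ha0 : a 0 = u := by
    have : (⟨min 0 n, Nat.lt_succ_of_le (min_le_right _ _)⟩ : Fin (n + 1)) = 0 := by
      apply Fin.ext; simp
    rw [ha_def]; simp only [this]; exact P.first
  have han : a n = v := by
    have : (⟨min n n, Nat.lt_succ_of_le (min_le_right _ _)⟩ : Fin (n + 1)) = Fin.last n := by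
      apply Fin.ext; simp [Fin.last]
    rw [ha_def]; simp only [this]; exact P.last
  have hcastS : ∀ i : Fin n, a i.1 = P.pts i.castSucc := by
    intro i
    have : (⟨min i.1 n, Nat.lt_succ_of_le (min_le_right _ _)⟩ : Fin (n + 1)) = i.castSucc := by
      apply Fin.ext; simp [Nat.min_eq_left i.isLt.le, Fin.castSucc]
    rw [ha_def]; simp only [this]
  have hsuccS : ∀ i : Fin n, a (i.1 + 1) = P.pts i.succ := by
    intro i
    have : (⟨min (i.1 + 1) n, Nat.lt_succ_of_le (min_le_right _ _)⟩ : Fin (n + 1)) = i.succ := by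
      apply Fin.ext; simp [Nat.min_eq_left i.isLt]
    rw [ha_def]; simp only [this]
  have hint : ∀ (x y : ℝ), IntervalIntegrable G MeasureTheory.volume x y := fun x y =>
    hG.intervalIntegrable x y
  have hsplit : ∫ x in u..v, G x = ∑ i ∈ Finset.range n, ∫ x in a i..a (i + 1), G x := by
    rw [intervalIntegral.sum_integral_adjacent_intervals (fun i _ => hint _ _), ha0, han]
  have key : ∀ i : Fin n,
      |G (P.tags i) * (P.pts i.succ - P.pts i.castSucc) -
        ∫ x in a i.1..a (i.1 + 1), G x| ≤ ε * (a (i.1 + 1) - a i.1) := by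
    intro i
    have hcd : P.pts i.castSucc ≤ P.pts i.succ := (P.mono (Fin.castSucc_lt_succ (i := i))).le
    have hdiff : P.pts i.succ - P.pts i.castSucc ≤ δ := le_trans (diff_le_norm P i) hnorm
    have hub := P.tag_ub i
    have hlb := P.tag_lb i
    rw [hcastS i, hsuccS i]
    have h1 : G (P.tags i) * (P.pts i.succ - P.pts i.castSucc) =
        ∫ _ in (P.pts i.castSucc)..(P.pts i.succ), (G (P.tags i) : ℝ) := by
      rw [intervalIntegral.integral_const, smul_eq_mul, mul_comm]
    rw [h1, ← intervalIntegral.integral_sub (intervalIntegrable_const (c := G (P.tags i))) (hint _ _)]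
    have hb : ∀ x ∈ uIoc (P.pts i.castSucc) (P.pts i.succ), ‖G (P.tags i) - G x‖ ≤ ε := by
      intro x hx
      rw [uIoc_of_le hcd] at hx
      rw [Real.norm_eq_abs]
      apply hmod
      rw [abs_sub_le_iff]
      exact ⟨by linarith [hx.1, hx.2], by linarith [hx.1, hx.2]⟩
    have h2 := intervalIntegral.norm_integral_le_of_norm_le_const hb
    rwa [Real.norm_eq_abs, abs_of_nonneg (sub_nonneg.2 hcd)] at h2
  have hsum : (∑ i : Fin n, G (P.tags i) * (P.pts i.succ - P.pts i.castSucc)) -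
      ∫ x in u..v, G x =
      ∑ i : Fin n, (G (P.tags i) * (P.pts i.succ - P.pts i.castSucc) -
        ∫ x in a i.1..a (i.1 + 1), G x) := by
    rw [Finset.sum_sub_distrib, hsplit, ← Fin.sum_univ_eq_sum_range
      (fun j => ∫ x in a j..a (j + 1), G x) n]
  rw [hsum]
  calc |∑ i : Fin n, (G (P.tags i) * (P.pts i.succ - P.pts i.castSucc) -
        ∫ x in a i.1..a (i.1 + 1), G x)|
      ≤ ∑ i : Fin n, |G (P.tags i) * (P.pts i.succ - P.pts i.castSucc) -
        ∫ x in a i.1..a (i.1 + 1), G x| := Finset.abs_sum_le_sum_abs _ _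
    _ ≤ ∑ i : Fin n, ε * (a (i.1 + 1) - a i.1) := Finset.sum_le_sum fun i _ => key i
    _ = ε * ∑ i : Fin n, (a (i.1 + 1) - a i.1) := by rw [Finset.mul_sum]
    _ = ε * (v - u) := by
        rw [Fin.sum_univ_eq_sum_range (fun j => a (j + 1) - a j) n,
          Finset.sum_range_sub a n, ha0, han]

/-- Existence of the Riemann integral of a UC function on a rational interval: there
is L such that every sequence of tagged partitions with norms tending to 0 has
Riemann sums tending to L. -/
theorem riemann_integral_exists (u v : ℝ) (huv : u < v) (f : ℚ → ℝ)
    (hf : UC (RatIcc u v) f) :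
    ∃ L : ℝ, ∀ P : ℕ → TaggedPartition u v,
      Tendsto (fun k => (P k).norm) atTop (𝓝 0) →
      Tendsto (fun k => (P k).riemannSum f) atTop (𝓝 L) := by
  obtain ⟨G, hGc, hGf, hGmod⟩ := exists_extension u v huv f hf
  refine ⟨∫ x in u..v, G x, fun P hP => ?_⟩
  rw [Metric.tendsto_atTop]
  intro ε hε
  have hvu : 0 < v - u := sub_pos.2 huv
  set ε' := ε / (2 * (v - u)) with hε'_def
  have hε' : 0 < ε' := div_pos hε (by positivity)
  obtain ⟨δ, hδ, hδmod⟩ := hGmod ε' hε'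
  obtain ⟨N, hN⟩ := (Metric.tendsto_atTop.1 hP) δ hδ
  refine ⟨N, fun k hk => ?_⟩
  have hnorm : (P k).norm ≤ δ := by
    have := hN k hk
    rw [Real.dist_eq, sub_zero] at this
    exact (le_abs_self _).trans this.le
  have heq : (P k).riemannSum f =
      ∑ i : Fin (P k).n, G ((P k).tags i) * ((P k).pts i.succ - (P k).pts i.castSucc) := by
    unfold TaggedPartition.riemannSum
    exact Finset.sum_congr rfl fun i _ => by rw [hGf _ (tags_mem (P k) i)]
  rw [Real.dist_eq, heq]
  calc |(∑ i : Fin (P k).n, G ((P k).tags i) * ((P k).pts i.succ - (P k).pts i.castSucc)) -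
        ∫ x in u..v, G x| ≤ ε' * (v - u) := riemann_est huv G hGc (P k) ε' δ hδmod hnorm
    _ = ε / 2 := by rw [hε'_def]; field_simp
    _ < ε := half_lt_self hε
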